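/- Let A and B be linear orders and let 'A + 1 + B' denote the linear order consisting of A, followed by one new point c, followed by B. Using the interval-wise back-and-forth relations ≤_ξ on linear orders, prove: for every ordinal ξ, (A + 1 + B) ≤_ξ (A' + 1 + B') if and only if A ≤_ξ A' and B ≤_ξ B', where the distinguished middle points are matched. -/

import Mathlib

/-- The intervals of a linear order determined by a finite increasing tuple:
`interval b i` is the set of points lying strictly between `b (i-1)` and `b i`
(with the obvious conventions at the ends). -/
def interval {L : Type} [LinearOrder L] {k : ℕ} (b : Fin k → L) (i : Fin (k + 1)) : Set L :=
  {z | (∀ j : Fin k, (j : ℕ) < (i : ℕ) → b j < z) ∧ (∀ j : Fin k, (i : ℕ) ≤ (j : ℕ) → z < b j)}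

/-- The interval-wise back-and-forth relation on linear orders, defined by transfinite
recursion: `bfLe 0 A B` always holds, and `bfLe ξ A B` iff for every `γ < ξ` and every
finite increasing tuple in `B` there is a finite increasing tuple in `A` of the same
length such that the corresponding intervals `B_i`, `A_i` satisfy `bfLe γ B_i A_i`. -/
def bfLe (ξ : Ordinal) (A B : Type) [LinearOrder A] [LinearOrder B] : Prop :=
  ∀ γ < ξ, ∀ (k : ℕ) (b : Fin k → B), StrictMono b →
    ∃ a : Fin k → A, StrictMono a ∧
      ∀ i : Fin (k + 1), bfLe γ ↥(interval b i) ↥(interval a i)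
termination_by ξ

/-- The standard back-and-forth relation between tuples in linear orders, defined by
transfinite recursion: `bfT 0` holds iff the tuples satisfy the same atomic formulas;
`bfT ξ L M a b` iff the tuples satisfy the same atomic formulas and for every `γ < ξ`
and every tuple `d` in `M` there is a tuple `c` in `L` with `bfT γ M L (b ++ d) (a ++ c)`. -/
def bfT (ξ : Ordinal) (L : Type) [LinearOrder L] (M : Type) [LinearOrder M]
    {k : ℕ} (a : Fin k → L) (b : Fin k → M) : Prop :=
  (∀ i j, a i ≤ a j ↔ b i ≤ b j) ∧
  ∀ γ < ξ, ∀ (l : ℕ) (d : Fin l → M), ∃ c : Fin l → L,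
    bfT γ M L (Fin.append b d) (Fin.append a c)
termination_by ξ

/-- Decomposition property for sums with a distinguished separating point:
`(A + 1 + B) ≤_ξ (A' + 1 + B')` with the two middle points matched (expressed via the
back-and-forth relation on the tuples consisting of the middle points) holds if and
only if `A ≤_ξ A'` and `B ≤_ξ B'` (interval-wise back-and-forth relations). -/
def Pos {L : Type} [LinearOrder L] {k : ℕ} (b : Fin k → L) (p : Fin k → Bool) : Set L :=
  {z | ∀ j, if p j then z < b j else b j < z}

theorem Pos.lt {L : Type} [LinearOrder L] {k : ℕ} {b : Fin k → L} {p : Fin k → Bool}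
    {z : L} (hz : z ∈ Pos b p) {j : Fin k} (hj : p j = true) : z < b j := by
  have := hz j; rwa [hj] at this; 

theorem Pos.gt {L : Type} [LinearOrder L] {k : ℕ} {b : Fin k → L} {p : Fin k → Bool}
    {z : L} (hz : z ∈ Pos b p) {j : Fin k} (hj : p j = false) : b j < z := by
  have := hz j; rwa [hj] at this

theorem Pos.mem {L : Type} [LinearOrder L] {k : ℕ} {b : Fin k → L} {p : Fin k → Bool}
    {z : L} (h1 : ∀ j, p j = true → z < b j) (h2 : ∀ j, p j = false → b j < z) :
    z ∈ Pos b p := by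
  intro j
  cases hj : p j with
  | true => simpa using h1 j hj
  | false => simpa using h2 j hj


/-- Build an order iso between two set-subtypes from a relating order iso. -/
def OrderIso.setIso {X Y : Type} [Preorder X] [Preorder Y] (e : X ≃o Y)
    (s : Set X) (t : Set Y) (h : ∀ x, x ∈ s ↔ e x ∈ t) : ↥s ≃o ↥t where
  toFun x := ⟨e x.1, (h x.1).1 x.2⟩
  invFun y := ⟨e.symm y.1, by rw [h]; simpa using y.2⟩
  left_inv x := by simp
  right_inv y := by simp
  map_rel_iff' := by intro x y; simp [Subtype.mk_le_mk]

theorem bfLe_congr : ∀ (ξ : Ordinal) {X Y X' Y' : Type} [LinearOrder X] [LinearOrder Y]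
    [LinearOrder X'] [LinearOrder Y'],
    (X ≃o X') → (Y ≃o Y') → bfLe ξ X Y → bfLe ξ X' Y' := by
  intro ξ
  induction ξ using Ordinal.induction with
  | h ξ IH =>
    intro X Y X' Y' _ _ _ _ eX eY h
    rw [bfLe] at h ⊢
    intro γ hγ k b' hb'
    obtain ⟨a, ha, hint⟩ := h γ hγ k (fun i => eY.symm (b' i))
      (fun i j hij => eY.symm.strictMono (hb' hij))
    refine ⟨fun i => eX (a i), fun i j hij => eX.strictMono (ha hij), fun i => ?_⟩
    refine IH γ hγ ?_ ?_ (hint i)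
    · exact eY.setIso _ _ (fun z => by
        constructor
        · rintro ⟨h1, h2⟩
          exact ⟨fun j hj => by simpa using eY.strictMono (h1 j hj),
                 fun j hj => by simpa using eY.strictMono (h2 j hj)⟩
        · rintro ⟨h1, h2⟩
          refine ⟨fun j hj => ?_, fun j hj => ?_⟩
          · have := eY.symm.strictMono (h1 j hj); simpa using this
          · have := eY.symm.strictMono (h2 j hj); simpa using this)
    · exact eX.setIso _ _ (fun z => by
        constructor
        · rintro ⟨h1, h2⟩
          exact ⟨fun j hj => eX.strictMono (h1 j hj), fun j hj => eX.strictMono (h2 j hj)⟩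
        · rintro ⟨h1, h2⟩
          refine ⟨fun j hj => ?_, fun j hj => ?_⟩
          · exact eX.lt_iff_lt.mp (h1 j hj)
          · exact eX.lt_iff_lt.mp (h2 j hj))

theorem bfLe_empty : ∀ (ξ : Ordinal) (X Y : Type) [LinearOrder X] [LinearOrder Y],
    IsEmpty X → IsEmpty Y → bfLe ξ X Y := by
  intro ξ
  induction ξ using Ordinal.induction with
  | h ξ IH =>
    intro X Y _ _ hX hY
    rw [bfLe]
    intro γ hγ k b hb
    match k with
    | 0 =>
      refine ⟨Fin.elim0, fun i => i.elim0, fun i => ?_⟩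
      exact IH γ hγ _ _ ⟨fun x => hY.false x.1⟩ ⟨fun x => hX.false x.1⟩
    | k+1 => exact (hY.false (b 0)).elim

def subSubIso {X : Type} [Preorder X] {s : Set X} {t : Set ↥s} {u : Set X}
    (h1 : ∀ x : ↥s, x ∈ t → (x : X) ∈ u)
    (h2 : ∀ x : X, x ∈ u → ∃ hx : x ∈ s, (⟨x, hx⟩ : ↥s) ∈ t) : ↥t ≃o ↥u where
  toFun x := ⟨x.1.1, h1 x.1 x.2⟩
  invFun y := ⟨⟨y.1, (h2 y.1 y.2).1⟩, (h2 y.1 y.2).2⟩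
  left_inv _ := rfl
  right_inv _ := rfl
  map_rel_iff' := Iff.rfl

theorem downward_closed_eq {m : ℕ} (s : Finset (Fin m))
    (hdc : ∀ t t' : Fin m, t ≤ t' → t' ∈ s → t ∈ s) (t : Fin m) :
    t ∈ s ↔ (t : ℕ) < s.card := by
  constructor
  · intro ht
    have hsub : Finset.Iic t ⊆ s := fun x hx => hdc x t (Finset.mem_Iic.mp hx) ht
    have := Finset.card_le_card hsub
    rw [Fin.card_Iic] at this
    omega
  · intro ht
    by_contra hts
    have hsub : s ⊆ Finset.Iio t := by
      intro x hx
      rw [Finset.mem_Iio]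
      rcases lt_or_ge x t with h | h
      · exact h
      · exact absurd (hdc t x h hx) hts
    have := Finset.card_le_card hsub
    rw [Fin.card_Iio] at this
    omega


section Side

variable {M N : Type} [LinearOrder M] [LinearOrder N]
variable {k l m₀ : ℕ}

open Classical in
/-- The set of indices `t` whose value `E t` is marked "below" by the pattern `q`. -/
noncomputable def MSet (q : Fin (k + l) → Bool) (d : Fin l → M) (E : Fin m₀ → M) :
    Finset (Fin m₀) :=
  Finset.univ.filter (fun t => ∃ j, d j = E t ∧ q (Fin.natAdd k j) = false)

theorem MSet_mem {q : Fin (k + l) → Bool} {d : Fin l → M} {E : Fin m₀ → M} {t : Fin m₀} :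
    t ∈ MSet q d E ↔ ∃ j, d j = E t ∧ q (Fin.natAdd k j) = false := by
  classical simp [MSet]

/-- Consistency of the pattern `q` w.r.t. the new tuple `d` (M-side data only). -/
def SideC (q : Fin (k + l) → Bool) (b : Fin k → M) (d : Fin l → M) (E : Fin m₀ → M) : Prop :=
  ∀ j : Fin l,
    (∀ j0, q (Fin.castAdd l j0) = false → d j ≤ b j0 → q (Fin.natAdd k j) = false) ∧
    (∀ j0, q (Fin.castAdd l j0) = true → b j0 ≤ d j → q (Fin.natAdd k j) = true) ∧
    (∀ t, d j = E t → q (Fin.natAdd k j) = decide ((MSet q d E).card ≤ (t : ℕ)))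

variable {q : Fin (k + l) → Bool} {b : Fin k → M} {d : Fin l → M} {E : Fin m₀ → M}
variable {β : Fin k → N} {δ : Fin l → N} {G : Fin m₀ → N}

theorem side_empty_lt (j : Fin l) (j0 : Fin k) (h0 : q (Fin.castAdd l j0) = false)
    (hmap : δ j ≤ β j0) (hq : q (Fin.natAdd k j) = true) :
    IsEmpty ↥(Pos (Fin.append β δ) q) := by
  constructor; rintro ⟨z, hz⟩
  have h1 : z < δ j := by have := Pos.lt hz hq; rwa [Fin.append_right] at this
  have h2 : β j0 < z := by have := Pos.gt hz h0; rwa [Fin.append_left] at this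
  exact absurd ((h1.trans_le hmap).trans h2) (lt_irrefl z)

theorem side_empty_gt (j : Fin l) (j0 : Fin k) (h0 : q (Fin.castAdd l j0) = true)
    (hmap : β j0 ≤ δ j) (hq : q (Fin.natAdd k j) = false) :
    IsEmpty ↥(Pos (Fin.append β δ) q) := by
  constructor; rintro ⟨z, hz⟩
  have h1 : δ j < z := by have := Pos.gt hz hq; rwa [Fin.append_right] at this
  have h2 : z < β j0 := by have := Pos.lt hz h0; rwa [Fin.append_left] at this
  exact absurd (h2.trans (hmap.trans_lt h1)) (lt_irrefl z)

theorem side_empty_cut (hG : Monotone G) (hEsurj : ∀ t, ∃ j, d j = E t)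
    (hmapE : ∀ j t, d j = E t → δ j = G t)
    (j : Fin l) (t : Fin m₀) (hdj : d j = E t)
    (hq : q (Fin.natAdd k j) ≠ decide ((MSet q d E).card ≤ (t : ℕ))) :
    IsEmpty ↥(Pos (Fin.append β δ) q) := by
  constructor; rintro ⟨z, hz⟩
  have hmem : ∀ t' : Fin m₀, t' ∈ MSet q d E ↔ G t' < z := by
    intro t'
    constructor
    · intro h
      obtain ⟨j', hdj', hqf⟩ := MSet_mem.mp h
      have := Pos.gt hz hqf
      rw [Fin.append_right, hmapE j' t' hdj'] at this
      exact this
    · intro hGz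
      obtain ⟨j', hdj'⟩ := hEsurj t'
      refine MSet_mem.mpr ⟨j', hdj', ?_⟩
      cases hq' : q (Fin.natAdd k j') with
      | false => rfl
      | true =>
        have := Pos.lt hz hq'
        rw [Fin.append_right, hmapE j' t' hdj'] at this
        exact absurd (this.trans hGz) (lt_irrefl z)
  have hdc : ∀ t1 t2 : Fin m₀, t1 ≤ t2 → t2 ∈ MSet q d E → t1 ∈ MSet q d E :=
    fun t1 t2 h12 h2 => (hmem t1).mpr ((hG h12).trans_lt ((hmem t2).mp h2))
  have hiff : ∀ t', t' ∈ MSet q d E ↔ (t' : ℕ) < (MSet q d E).card :=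
    downward_closed_eq _ hdc
  cases hqv : q (Fin.natAdd k j) with
  | true =>
    have h1 : z < G t := by
      have := Pos.lt hz hqv; rwa [Fin.append_right, hmapE j t hdj] at this
    have h2 : ¬ (t : ℕ) < (MSet q d E).card := by
      rw [← hiff, hmem]
      exact fun h => absurd (h1.trans h) (lt_irrefl z)
    rw [hqv] at hq
    have h3 : (MSet q d E).card ≤ (t : ℕ) := by omega
    exact hq (decide_eq_true h3).symm
  | false =>
    have h1 : G t < z := by
      have := Pos.gt hz hqv; rwa [Fin.append_right, hmapE j t hdj] at this
    have h2 : (t : ℕ) < (MSet q d E).card := (hiff t).mp ((hmem t).mpr h1)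
    rw [hqv] at hq
    cases hd : decide ((MSet q d E).card ≤ (t : ℕ)) with
    | false => exact hq (by rw [hd])
    | true => simp only [decide_eq_true_eq] at hd; omega

theorem side_iso (hG : StrictMono G)
    (hGmem : ∀ t, G t ∈ Pos β (fun j0 => q (Fin.castAdd l j0)))
    (hEsurj : ∀ t, ∃ j, d j = E t)
    (hmapE : ∀ j t, d j = E t → δ j = G t)
    (hmapLE : ∀ (j : Fin l) (j0 : Fin k), d j ≤ b j0 → δ j ≤ β j0)
    (hmapGE : ∀ (j : Fin l) (j0 : Fin k), b j0 ≤ d j → β j0 ≤ δ j)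
    (htri : ∀ j : Fin l, (∃ t, d j = E t) ∨ (∃ j0, q (Fin.castAdd l j0) = false ∧ d j ≤ b j0)
      ∨ (∃ j0, q (Fin.castAdd l j0) = true ∧ b j0 ≤ d j))
    (hC : SideC q b d E)
    (i' : Fin (m₀ + 1)) (hi' : (i' : ℕ) = (MSet q d E).card) :
    Nonempty (↥(interval (fun t => (⟨G t, hGmem t⟩ : ↥(Pos β (fun j0 => q (Fin.castAdd l j0))))) i')
      ≃o ↥(Pos (Fin.append β δ) q)) := by
  have hMS : ∀ t : Fin m₀, t ∈ MSet q d E ↔ (t : ℕ) < (MSet q d E).card := by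
    intro t
    constructor
    · intro h
      obtain ⟨j, hdj, hqf⟩ := MSet_mem.mp h
      have := (hC j).2.2 t hdj
      rw [hqf] at this
      have := of_decide_eq_false this.symm
      omega
    · intro h
      obtain ⟨j, hdj⟩ := hEsurj t
      refine MSet_mem.mpr ⟨j, hdj, ?_⟩
      rw [(hC j).2.2 t hdj, decide_eq_false_iff_not]
      omega
  refine ⟨subSubIso ?_ ?_⟩
  · rintro ⟨x, hx⟩ ⟨hx1, hx2⟩
    refine Pos.mem ?_ ?_
    · intro r
      refine Fin.addCases (fun j0 hq0 => ?_) (fun j hqj => ?_) r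
      · rw [Fin.append_left]; exact Pos.lt hx hq0
      · rw [Fin.append_right]
        rcases htri j with ⟨t, hdj⟩ | ⟨j0, h0, hle⟩ | ⟨j0, h0, hge⟩
        · have hqt := (hC j).2.2 t hdj
          rw [hqj] at hqt
          have hct : (MSet q d E).card ≤ (t : ℕ) := of_decide_eq_true hqt.symm
          have := hx2 t (by omega)
          rw [Subtype.mk_lt_mk] at this
          rw [hmapE j t hdj]
          exact this
        · exact absurd ((hC j).1 j0 h0 hle) (by rw [hqj]; simp)
        · exact (Pos.lt hx h0).trans_le (hmapGE j j0 hge)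
    · intro r
      refine Fin.addCases (fun j0 hq0 => ?_) (fun j hqj => ?_) r
      · rw [Fin.append_left]; exact Pos.gt hx hq0
      · rw [Fin.append_right]
        rcases htri j with ⟨t, hdj⟩ | ⟨j0, h0, hle⟩ | ⟨j0, h0, hge⟩
        · have hqt := (hC j).2.2 t hdj
          rw [hqj] at hqt
          have hct : ¬ (MSet q d E).card ≤ (t : ℕ) := of_decide_eq_false hqt.symm
          have := hx1 t (by omega)
          rw [Subtype.mk_lt_mk] at this
          rw [hmapE j t hdj]
          exact this
        · exact (hmapLE j j0 hle).trans_lt (Pos.gt hx h0)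
        · exact absurd ((hC j).2.1 j0 h0 hge) (by rw [hqj]; simp)
  · intro z hzq
    have hz : z ∈ Pos β (fun j0 => q (Fin.castAdd l j0)) := by
      refine Pos.mem (fun j0 h0 => ?_) (fun j0 h0 => ?_)
      · have := Pos.lt hzq h0; rwa [Fin.append_left] at this
      · have := Pos.gt hzq h0; rwa [Fin.append_left] at this
    refine ⟨hz, ?_, ?_⟩
    · intro t ht
      rw [Subtype.mk_lt_mk]
      rw [hi'] at ht
      obtain ⟨j, hdj, hqf⟩ := MSet_mem.mp ((hMS t).mpr ht)
      have := Pos.gt hzq hqf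
      rwa [Fin.append_right, hmapE j t hdj] at this
    · intro t ht
      rw [Subtype.mk_lt_mk]
      rw [hi'] at ht
      obtain ⟨j, hdj⟩ := hEsurj t
      have hqt : q (Fin.natAdd k j) = true := by
        rw [(hC j).2.2 t hdj, decide_eq_true_eq]; omega
      have := Pos.lt hzq hqt
      rwa [Fin.append_right, hmapE j t hdj] at this

end Side


theorem bfT_iff_bfLe (ξ : Ordinal) : ∀ (L M : Type) [LinearOrder L] [LinearOrder M]
    (k : ℕ) (a : Fin k → L) (b : Fin k → M),
    (∀ i j, a i ≤ a j ↔ b i ≤ b j) →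
    (bfT ξ L M a b ↔ ∀ p : Fin k → Bool, bfLe ξ ↥(Pos a p) ↥(Pos b p)) := by
  induction ξ using Ordinal.induction with
  | h ξ IH =>
  intro L M instL instM k a b hab
  constructor
  · -- forward
    intro hT p
    rw [bfT] at hT
    rw [bfLe]
    intro γ hγ l d hd
    obtain ⟨c, hc⟩ := hT.2 γ hγ l (fun j => (d j : M))
    rw [bfT] at hc
    have hat := hc.1
    have hlt : ∀ r s, Fin.append b (fun j => (d j : M)) r < Fin.append b (fun j => (d j : M)) s
        ↔ Fin.append a c r < Fin.append a c s := by
      intro r s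
      rw [lt_iff_not_ge, lt_iff_not_ge, hat s r]
    have hcd : ∀ (j : Fin l) (j' : Fin k), ((d j : M) < b j' ↔ c j < a j') := by
      intro j j'
      have := hlt (Fin.natAdd k j) (Fin.castAdd l j')
      rwa [Fin.append_right, Fin.append_left, Fin.append_right, Fin.append_left] at this
    have hdc : ∀ (j : Fin l) (j' : Fin k), (b j' < (d j : M) ↔ a j' < c j) := by
      intro j j'
      have := hlt (Fin.castAdd l j') (Fin.natAdd k j)
      rwa [Fin.append_right, Fin.append_left, Fin.append_right, Fin.append_left] at this
    have hcc : ∀ j1 j2 : Fin l, ((d j1 : M) < (d j2 : M) ↔ c j1 < c j2) := by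
      intro j1 j2
      have := hlt (Fin.natAdd k j1) (Fin.natAdd k j2)
      rwa [Fin.append_right, Fin.append_right, Fin.append_right, Fin.append_right] at this
    have hmem : ∀ j, c j ∈ Pos a p := fun j =>
      Pos.mem (fun j' h' => (hcd j j').mp (Pos.lt (d j).2 h'))
              (fun j' h' => (hdc j j').mp (Pos.gt (d j).2 h'))
    refine ⟨fun j => ⟨c j, hmem j⟩, ?_, fun i => ?_⟩
    · intro j1 j2 h
      rw [Subtype.mk_lt_mk]
      exact (hcc j1 j2).mp (Subtype.coe_lt_coe.mpr (hd h))
    · have hKL := (IH γ hγ M L (k + l) (Fin.append b (fun j => (d j : M))) (Fin.append a c)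
        hat).mp (by rw [bfT]; exact hc)
      have hb := hKL (Fin.append p (fun j : Fin l => decide ((i : ℕ) ≤ (j : ℕ))))
      refine bfLe_congr γ (subSubIso ?_ ?_).symm (subSubIso ?_ ?_).symm hb
      · -- M side: interval d i → Pos u q
        rintro ⟨x, hx⟩ ⟨hx1, hx2⟩
        refine Pos.mem ?_ ?_ <;> intro r
        · induction r using Fin.addCases with
          | left j' =>
            intro hr
            rw [Fin.append_left] at hr
            rw [Fin.append_left]
            exact Pos.lt hx hr
          | right j =>
            intro hr
            rw [Fin.append_right] at hr
            rw [Fin.append_right]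
            exact Subtype.coe_lt_coe.mpr (hx2 j (of_decide_eq_true hr))
        · induction r using Fin.addCases with
          | left j' =>
            intro hr
            rw [Fin.append_left] at hr
            rw [Fin.append_left]
            exact Pos.gt hx hr
          | right j =>
            intro hr
            rw [Fin.append_right] at hr
            rw [Fin.append_right]
            have : (j : ℕ) < (i : ℕ) := by
              have := of_decide_eq_false hr; omega
            exact Subtype.coe_lt_coe.mpr (hx1 j this)
      · intro z hzq
        have hz : z ∈ Pos b p := by
          refine Pos.mem (fun j' h' => ?_) (fun j' h' => ?_)
          · have := Pos.lt hzq (j := Fin.castAdd l j') (by rwa [Fin.append_left])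
            rwa [Fin.append_left] at this
          · have := Pos.gt hzq (j := Fin.castAdd l j') (by rwa [Fin.append_left])
            rwa [Fin.append_left] at this
        refine ⟨hz, fun j hj => ?_, fun j hj => ?_⟩
        · rw [← Subtype.coe_lt_coe]
          have := Pos.gt hzq (j := Fin.natAdd k j)
            (by rw [Fin.append_right]; exact decide_eq_false (by omega))
          rwa [Fin.append_right] at this
        · rw [← Subtype.coe_lt_coe]
          have := Pos.lt hzq (j := Fin.natAdd k j)
            (by rw [Fin.append_right]; exact decide_eq_true hj)
          rwa [Fin.append_right] at this
      · -- L side: interval c' i → Pos v q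
        rintro ⟨x, hx⟩ ⟨hx1, hx2⟩
        refine Pos.mem ?_ ?_ <;> intro r
        · induction r using Fin.addCases with
          | left j' =>
            intro hr
            rw [Fin.append_left] at hr
            rw [Fin.append_left]
            exact Pos.lt hx hr
          | right j =>
            intro hr
            rw [Fin.append_right] at hr
            rw [Fin.append_right]
            exact hx2 j (of_decide_eq_true hr)
        · induction r using Fin.addCases with
          | left j' =>
            intro hr
            rw [Fin.append_left] at hr
            rw [Fin.append_left]
            exact Pos.gt hx hr
          | right j =>
            intro hr
            rw [Fin.append_right] at hr
            rw [Fin.append_right]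
            have : (j : ℕ) < (i : ℕ) := by
              have := of_decide_eq_false hr; omega
            exact hx1 j this
      · intro z hzq
        have hz : z ∈ Pos a p := by
          refine Pos.mem (fun j' h' => ?_) (fun j' h' => ?_)
          · have := Pos.lt hzq (j := Fin.castAdd l j') (by rwa [Fin.append_left])
            rwa [Fin.append_left] at this
          · have := Pos.gt hzq (j := Fin.castAdd l j') (by rwa [Fin.append_left])
            rwa [Fin.append_left] at this
        refine ⟨hz, fun j hj => ?_, fun j hj => ?_⟩
        · rw [Subtype.mk_lt_mk]
          have := Pos.gt hzq (j := Fin.natAdd k j)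
            (by rw [Fin.append_right]; exact decide_eq_false (by omega))
          rwa [Fin.append_right] at this
        · rw [Subtype.mk_lt_mk]
          have := Pos.lt hzq (j := Fin.natAdd k j)
            (by rw [Fin.append_right]; exact decide_eq_true hj)
          rwa [Fin.append_right] at this
  · -- backward
    intro hA
    rw [bfT]
    refine ⟨hab, ?_⟩
    intro γ hγ l d
    classical
    have hablt : ∀ i j, b i < b j → a i < a j := by
      intro i j h
      rw [lt_iff_not_ge] at h ⊢
      exact fun hle => h ((hab j i).mp hle)
    have habeq : ∀ i j, b i = b j → a i = a j := fun i j h =>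
      le_antisymm ((hab i j).mpr h.le) ((hab j i).mpr h.ge)
    set S : (Fin k → Bool) → Finset M :=
      fun p => (Finset.univ.image d).filter (fun x => x ∈ Pos b p) with hSdef
    have hSsub : ∀ p x, x ∈ S p → (x ∈ Pos b p ∧ ∃ j, d j = x) := by
      intro p x hx
      simp only [hSdef, Finset.mem_filter, Finset.mem_image, Finset.mem_univ, true_and] at hx
      exact ⟨hx.2, hx.1⟩
    have hSd : ∀ p (j : Fin l), d j ∈ Pos b p → d j ∈ S p := by
      intro p j h
      simp only [hSdef, Finset.mem_filter, Finset.mem_image, Finset.mem_univ, true_and]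
      exact ⟨⟨j, rfl⟩, h⟩
    set EM : ∀ p : Fin k → Bool, Fin ((S p).card) → M :=
      fun p => ⇑((S p).orderEmbOfFin rfl) with hEMdef
    have hEMmono : ∀ p, StrictMono (EM p) := by
      intro p; simp only [hEMdef]; exact ((S p).orderEmbOfFin rfl).strictMono
    have hEMS : ∀ p t, EM p t ∈ S p := by
      intro p t; simp only [hEMdef]; exact Finset.orderEmbOfFin_mem _ rfl t
    have hEMmem : ∀ p t, EM p t ∈ Pos b p := fun p t => (hSsub p _ (hEMS p t)).1
    have hEMsurj : ∀ p x, x ∈ S p → ∃ t, EM p t = x := by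
      intro p x hx
      have hr := Finset.range_orderEmbOfFin (S p) rfl
      have : x ∈ Set.range ((S p).orderEmbOfFin rfl) := by rw [hr]; exact hx
      obtain ⟨t, ht⟩ := this
      exact ⟨t, by simp only [hEMdef]; exact ht⟩
    have hHa : ∀ p, ∃ F : Fin ((S p).card) → ↥(Pos a p), StrictMono F ∧
        ∀ i : Fin ((S p).card + 1),
          bfLe γ ↥(interval (fun t => (⟨EM p t, hEMmem p t⟩ : ↥(Pos b p))) i) ↥(interval F i) := by
      intro p
      have h' := hA p
      rw [bfLe] at h'
      exact h' γ hγ ((S p).card) (fun t => ⟨EM p t, hEMmem p t⟩)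
        (fun t1 t2 h => by rw [Subtype.mk_lt_mk]; exact hEMmono p h)
    choose F hFmono hFint using hHa
    set FL : ∀ p : Fin k → Bool, Fin ((S p).card) → L := fun p t => (F p t : L) with hFLdef
    have hFLmono : ∀ p, StrictMono (FL p) := by
      intro p t1 t2 h
      simp only [hFLdef]
      exact Subtype.coe_lt_coe.mpr (hFmono p h)
    have hFLmem : ∀ p t, FL p t ∈ Pos a p := fun p t => (F p t).2
    have hFLcong : ∀ p p', p = p' → ∀ t t', EM p t = EM p' t' → FL p t = FL p' t' := by
      rintro p p' rfl t t' h
      rw [(hEMmono p).injective h]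
    have hpat : ∀ j : Fin l, (¬ ∃ j', d j = b j') →
        d j ∈ Pos b (fun j' => decide (d j < b j')) := by
      intro j hne
      refine Pos.mem (fun j' h' => of_decide_eq_true h') (fun j' h' => ?_)
      have h1 : ¬ d j < b j' := of_decide_eq_false h'
      exact lt_of_le_of_ne (not_lt.mp h1) (fun he => hne ⟨j', he.symm⟩)
    set c : Fin l → L := fun j =>
      if h : ∃ j', d j = b j' then a h.choose
      else FL (fun j' => decide (d j < b j'))
        (hEMsurj _ _ (hSd _ j (hpat j h))).choose with hcdef
    have hReld : ∀ j, (∃ j', d j = b j' ∧ c j = a j') ∨ ∃ p t, d j = EM p t ∧ c j = FL p t := by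
      intro j
      by_cases h : ∃ j', d j = b j'
      · refine Or.inl ⟨h.choose, h.choose_spec, ?_⟩
        simp only [hcdef]
        rw [dif_pos h]
      · refine Or.inr ⟨_, _, (hEMsurj _ _ (hSd _ j (hpat j h))).choose_spec.symm, ?_⟩
        simp only [hcdef]
        rw [dif_neg h]
    have key : ∀ (x : M) (y : L),
        ((∃ j', x = b j' ∧ y = a j') ∨ ∃ p t, x = EM p t ∧ y = FL p t) →
        ∀ (x' : M) (y' : L),
        ((∃ j', x' = b j' ∧ y' = a j') ∨ ∃ p t, x' = EM p t ∧ y' = FL p t) →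
        (x < x' → y < y') ∧ (x = x' → y = y') := by
      rintro x y (⟨j1, rfl, rfl⟩ | ⟨p, t, rfl, rfl⟩) x' y' (⟨j2, rfl, rfl⟩ | ⟨p', t', rfl, rfl⟩)
      · exact ⟨hablt j1 j2, habeq j1 j2⟩
      · constructor
        · intro h
          cases hp : p' j1 with
          | true => exact absurd (h.trans (Pos.lt (hEMmem p' t') hp)) (lt_irrefl _)
          | false => exact Pos.gt (hFLmem p' t') hp
        · intro h
          cases hp : p' j1 with
          | true => exact absurd (h ▸ Pos.lt (hEMmem p' t') hp) (lt_irrefl _)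
          | false => exact absurd (h ▸ Pos.gt (hEMmem p' t') hp) (lt_irrefl _)
      · constructor
        · intro h
          cases hp : p j2 with
          | true => exact Pos.lt (hFLmem p t) hp
          | false => exact absurd ((Pos.gt (hEMmem p t) hp).trans h) (lt_irrefl _)
        · intro h
          cases hp : p j2 with
          | true => exact absurd (h ▸ Pos.lt (hEMmem p t) hp) (lt_irrefl _)
          | false => exact absurd (h ▸ Pos.gt (hEMmem p t) hp) (lt_irrefl _)
      · by_cases hpp : p = p'
        · subst hpp
          constructor
          · intro h
            exact hFLmono p ((hEMmono p).lt_iff_lt.mp h)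
          · intro h
            rw [(hEMmono p).injective h]
        · obtain ⟨j0, hj0⟩ := Function.ne_iff.mp hpp
          cases h0 : p j0 with
          | true =>
            cases h0' : p' j0 with
            | true => rw [h0, h0'] at hj0; exact absurd rfl hj0
            | false =>
              refine ⟨fun _ => (Pos.lt (hFLmem p t) h0).trans (Pos.gt (hFLmem p' t') h0'),
                fun h => ?_⟩
              have := (Pos.lt (hEMmem p t) h0).trans (Pos.gt (hEMmem p' t') h0')
              exact absurd (h ▸ this) (lt_irrefl _)
          | false =>
            cases h0' : p' j0 with
            | false => rw [h0, h0'] at hj0; exact absurd rfl hj0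
            | true =>
              have hx : EM p' t' < EM p t :=
                (Pos.lt (hEMmem p' t') h0').trans (Pos.gt (hEMmem p t) h0)
              refine ⟨fun h => absurd (h.trans hx) (lt_irrefl _), fun h => ?_⟩
              exact absurd (h ▸ hx) (lt_irrefl _)
    have hRel : ∀ r : Fin (k + l),
        (∃ j', Fin.append b d r = b j' ∧ Fin.append a c r = a j') ∨
        ∃ p t, Fin.append b d r = EM p t ∧ Fin.append a c r = FL p t := by
      intro r
      induction r using Fin.addCases with
      | left j' =>
        rw [Fin.append_left, Fin.append_left]
        exact Or.inl ⟨j', rfl, rfl⟩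
      | right j =>
        rw [Fin.append_right, Fin.append_right]
        exact hReld j
    have hvu : ∀ r s, Fin.append b d r ≤ Fin.append b d s ↔
        Fin.append a c r ≤ Fin.append a c s := by
      intro r s
      constructor
      · intro h
        rcases h.lt_or_eq with h | h
        · exact ((key _ _ (hRel r) _ _ (hRel s)).1 h).le
        · exact ((key _ _ (hRel r) _ _ (hRel s)).2 h).le
      · intro h
        by_contra hno
        exact absurd h ((key _ _ (hRel s) _ _ (hRel r)).1 (lt_of_not_ge hno)).not_ge
    refine ⟨c, (IH γ hγ M L (k + l) (Fin.append b d) (Fin.append a c) hvu).mpr ?_⟩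
    intro q
    set p₀ : Fin k → Bool := fun j0 => q (Fin.castAdd l j0) with hp₀def
    have hEsurj : ∀ t, ∃ j, d j = EM p₀ t := by
      intro t
      obtain ⟨_, j, hj⟩ := hSsub p₀ _ (hEMS p₀ t)
      exact ⟨j, hj⟩
    have hcE : ∀ (j : Fin l) t, d j = EM p₀ t → c j = FL p₀ t := by
      intro j t hdj
      have hdPos : d j ∈ Pos b p₀ := hdj ▸ hEMmem p₀ t
      have hnb : ¬ ∃ j', d j = b j' := by
        rintro ⟨j', he⟩
        have := hdPos j'
        rw [he] at this
        cases hp : p₀ j' <;> rw [hp] at this <;> simp at this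
      have hpp : (fun j' => decide (d j < b j')) = p₀ := by
        funext j0
        cases hp : p₀ j0 with
        | true => exact decide_eq_true (Pos.lt hdPos hp)
        | false => exact decide_eq_false (not_lt.mpr (le_of_lt (Pos.gt hdPos hp)))
      have : c j = FL (fun j' => decide (d j < b j'))
          (hEMsurj _ _ (hSd _ j (hpat j hnb))).choose := by
        simp only [hcdef]
        rw [dif_neg hnb]
      rw [this]
      refine hFLcong _ _ hpp _ _ ?_
      rw [(hEMsurj _ _ (hSd _ j (hpat j hnb))).choose_spec]
      exact hdj
    have hcLE : ∀ (j : Fin l) (j0 : Fin k), d j ≤ b j0 → c j ≤ a j0 := by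
      intro j j0 h
      rcases h.lt_or_eq with h | h
      · exact ((key _ _ (hReld j) _ _ (Or.inl ⟨j0, rfl, rfl⟩)).1 h).le
      · exact ((key _ _ (hReld j) _ _ (Or.inl ⟨j0, rfl, rfl⟩)).2 h).le
    have hcGE : ∀ (j : Fin l) (j0 : Fin k), b j0 ≤ d j → a j0 ≤ c j := by
      intro j j0 h
      rcases h.lt_or_eq with h | h
      · exact ((key _ _ (Or.inl ⟨j0, rfl, rfl⟩) _ _ (hReld j)).1 h).le
      · exact ((key _ _ (Or.inl ⟨j0, rfl, rfl⟩) _ _ (hReld j)).2 h).le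
    have htri : ∀ j : Fin l, (∃ t, d j = EM p₀ t) ∨
        (∃ j0, q (Fin.castAdd l j0) = false ∧ d j ≤ b j0) ∨
        (∃ j0, q (Fin.castAdd l j0) = true ∧ b j0 ≤ d j) := by
      intro j
      by_cases h : d j ∈ Pos b p₀
      · obtain ⟨t, ht⟩ := hEMsurj p₀ _ (hSd p₀ j h)
        exact Or.inl ⟨t, ht.symm⟩
      · right
        simp only [Pos, Set.mem_setOf_eq] at h
        obtain ⟨j0, hj0⟩ := not_forall.mp h
        cases hp : p₀ j0 with
        | false =>
          simp only [hp] at hj0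
          simp only [Bool.false_eq_true, if_false, not_lt] at hj0
          exact Or.inl ⟨j0, hp, hj0⟩
        | true =>
          simp only [hp, if_true, not_lt] at hj0
          exact Or.inr ⟨j0, hp, hj0⟩
    by_cases hC : SideC q b d (EM p₀)
    · have hcut : (MSet q d (EM p₀)).card < (S p₀).card + 1 := by
        have h1 := Finset.card_le_univ (MSet q d (EM p₀))
        simp only [Finset.card_univ, Fintype.card_fin] at h1
        omega
      obtain ⟨iso1⟩ := side_iso (hEMmono p₀) (fun t => hEMmem p₀ t) hEsurj
        (fun _ _ h => h) (fun _ _ h => h) (fun _ _ h => h) htri hC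
        ⟨(MSet q d (EM p₀)).card, hcut⟩ rfl
      obtain ⟨iso2⟩ := side_iso (hFLmono p₀) (fun t => hFLmem p₀ t) hEsurj
        hcE hcLE hcGE htri hC ⟨(MSet q d (EM p₀)).card, hcut⟩ rfl
      exact bfLe_congr γ iso1 iso2 (hFint p₀ ⟨(MSet q d (EM p₀)).card, hcut⟩)
    · simp only [SideC] at hC
      obtain ⟨j, hj⟩ := not_forall.mp hC
      rcases not_and_or.mp hj with h1 | h23
      · push_neg at h1
        obtain ⟨j0, hq0, hle, hne⟩ := h1
        have hqt : q (Fin.natAdd k j) = true := by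
          cases hqq : q (Fin.natAdd k j)
          · exact absurd hqq hne
          · rfl
        exact bfLe_empty γ _ _ (side_empty_lt j j0 hq0 hle hqt)
          (side_empty_lt j j0 hq0 (hcLE j j0 hle) hqt)
      · rcases not_and_or.mp h23 with h2 | h3
        · push_neg at h2
          obtain ⟨j0, hq0, hge, hne⟩ := h2
          have hqf : q (Fin.natAdd k j) = false := by
            cases hqq : q (Fin.natAdd k j)
            · rfl
            · exact absurd hqq hne
          exact bfLe_empty γ _ _ (side_empty_gt j j0 hq0 hge hqf)
            (side_empty_gt j j0 hq0 (hcGE j j0 hge) hqf)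
        · push_neg at h3
          obtain ⟨t, hdj, hne⟩ := h3
          exact bfLe_empty γ _ _
            (side_empty_cut (hEMmono p₀).monotone hEsurj (fun _ _ h => h) j t hdj hne)
            (side_empty_cut (hFLmono p₀).monotone hEsurj hcE j t hdj hne)

theorem pos_single_true {L : Type} [LinearOrder L] (x : L) (p : Fin 1 → Bool) (hp : p 0 = true) :
    Pos ![x] p = {z | z < x} := by
  ext z
  constructor
  · intro h
    have := Pos.lt h hp
    simpa using this
  · intro h
    refine Pos.mem (fun j hj => ?_) (fun j hj => ?_)
    · fin_cases j; simpa using h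
    · fin_cases j; exact absurd (show p 0 = false from hj) (by simp [hp])

theorem pos_single_false {L : Type} [LinearOrder L] (x : L) (p : Fin 1 → Bool) (hp : p 0 = false) :
    Pos ![x] p = {z | x < z} := by
  ext z
  constructor
  · intro h
    have := Pos.gt h hp
    simpa using this
  · intro h
    refine Pos.mem (fun j hj => ?_) (fun j hj => ?_)
    · fin_cases j; exact absurd (show p 0 = true from hj) (by simp [hp])
    · fin_cases j; simpa using h

noncomputable def leftIso (A B : Type) [LinearOrder A] [LinearOrder B] :
    A ≃o ↥{z : A ⊕ₗ Unit ⊕ₗ B | z < toLex (Sum.inr (toLex (Sum.inl ())))} := by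
  refine StrictMono.orderIsoOfSurjective
    (fun x => ⟨toLex (Sum.inl x), Sum.Lex.inl_lt_inr _ _⟩) ?_ ?_
  · intro x y h
    rw [Subtype.mk_lt_mk]
    exact Sum.Lex.inl_lt_inl_iff.mpr h
  · rintro ⟨w, hw⟩
    rcases w with x | y
    · exact ⟨x, rfl⟩
    · exfalso
      rcases y with u | bb
      · have := Sum.Lex.inl_lt_inl_iff.mp (Sum.Lex.inr_lt_inr_iff.mp hw)
        exact this.ne (Subsingleton.elim _ _)
      · exact absurd (Sum.Lex.inr_lt_inr_iff.mp hw) Sum.Lex.not_inr_lt_inl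

noncomputable def rightIso (A B : Type) [LinearOrder A] [LinearOrder B] :
    B ≃o ↥{z : A ⊕ₗ Unit ⊕ₗ B | toLex (Sum.inr (toLex (Sum.inl ()))) < z} := by
  refine StrictMono.orderIsoOfSurjective
    (fun x => ⟨toLex (Sum.inr (toLex (Sum.inr x))),
      Sum.Lex.inr_lt_inr_iff.mpr (Sum.Lex.inl_lt_inr _ _)⟩) ?_ ?_
  · intro x y h
    rw [Subtype.mk_lt_mk]
    exact Sum.Lex.inr_lt_inr_iff.mpr (Sum.Lex.inr_lt_inr_iff.mpr h)
  · rintro ⟨w, hw⟩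
    rcases w with x | y
    · exact absurd hw Sum.Lex.not_inr_lt_inl
    · rcases y with u | bb
      · have := Sum.Lex.inl_lt_inl_iff.mp (Sum.Lex.inr_lt_inr_iff.mp hw)
        exact (this.ne (Subsingleton.elim _ _)).elim
      · exact ⟨bb, rfl⟩

theorem sum_one_bf_iff (A A' B B' : Type)
    [LinearOrder A] [LinearOrder A'] [LinearOrder B] [LinearOrder B'] :
    ∀ ξ : Ordinal,
      bfT ξ (A ⊕ₗ Unit ⊕ₗ B) (A' ⊕ₗ Unit ⊕ₗ B')
          ![toLex (Sum.inr (toLex (Sum.inl ())))] ![toLex (Sum.inr (toLex (Sum.inl ())))] ↔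
        (bfLe ξ A A' ∧ bfLe ξ B B') := by
  intro ξ
  rw [bfT_iff_bfLe ξ _ _ 1 _ _ (by intro i j; fin_cases i; fin_cases j; simp)]
  constructor
  · intro h
    constructor
    · refine bfLe_congr ξ ?_ ?_ (h (fun _ => true))
      · exact (OrderIso.setCongr _ _ (pos_single_true _ _ rfl)).trans (leftIso A B).symm
      · exact (OrderIso.setCongr _ _ (pos_single_true _ _ rfl)).trans (leftIso A' B').symm
    · refine bfLe_congr ξ ?_ ?_ (h (fun _ => false))
      · exact (OrderIso.setCongr _ _ (pos_single_false _ _ rfl)).trans (rightIso A B).symm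
      · exact (OrderIso.setCongr _ _ (pos_single_false _ _ rfl)).trans (rightIso A' B').symm
  · intro h p
    cases hp : p 0 with
    | true =>
      refine bfLe_congr ξ ?_ ?_ h.1
      · exact (leftIso A B).trans (OrderIso.setCongr _ _ (pos_single_true _ _ hp).symm)
      · exact (leftIso A' B').trans (OrderIso.setCongr _ _ (pos_single_true _ _ hp).symm)
    | false =>
      refine bfLe_congr ξ ?_ ?_ h.2
      · exact (rightIso A B).trans (OrderIso.setCongr _ _ (pos_single_false _ _ hp).symm)
      · exact (rightIso A' B').trans (OrderIso.setCongr _ _ (pos_single_false _ _ hp).symm)
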